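/- For the vector field X associated to the system u̇ = -v + h, v̇ = u + h, ẇ = -w + h with h(u,v,w) = a₁u² - a₁v² - 2a₁w² + 6a₁uv - 4a₁uw, the polynomial F(u,v,w) = w + a₁(u-v)² - 2a₁(v-w)² satisfies XF = -F, i.e., F = 0 is an invariant algebraic surface with cofactor K = -1. -/

import Mathlib

noncomputable def h1 (a₁ u v w : ℝ) : ℝ :=
  a₁*u^2 - a₁*v^2 - 2*a₁*w^2 + 6*a₁*u*v - 4*a₁*u*w

noncomputable def F1 (a₁ u v w : ℝ) : ℝ :=
  w + a₁*(u - v)^2 - 2*a₁*(v - w)^2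

/-- F = 0 is an invariant algebraic surface with cofactor K = -1. -/
theorem stmt_1 : ∀ a₁ u v w : ℝ,
    (-v + h1 a₁ u v w) * deriv (fun s => F1 a₁ s v w) u
    + (u + h1 a₁ u v w) * deriv (fun s => F1 a₁ u s w) v
    + (-w + h1 a₁ u v w) * deriv (fun s => F1 a₁ u v s) w
    = -F1 a₁ u v w := by
  intro a₁ u v w
  have d1 : deriv (fun s => F1 a₁ s v w) u = 2*a₁*(u - v) := by
    simp only [F1]
    rw [show (fun s => w + a₁*(s - v)^2 - 2*a₁*(v - w)^2)
        = fun s => a₁*(s - v)^2 + (w - 2*a₁*(v - w)^2) by funext s; ring]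
    rw [deriv_add_const]
    have : HasDerivAt (fun s : ℝ => a₁*(s - v)^2) (2*a₁*(u - v)) u := by
      have := ((hasDerivAt_id u).sub_const v).pow 2
      simpa [mul_comm, mul_assoc, mul_left_comm] using this.const_mul a₁
    exact this.deriv
  have d2 : deriv (fun s => F1 a₁ u s w) v = -2*a₁*(u - v) - 4*a₁*(v - w) := by
    simp only [F1]
    have h1 : HasDerivAt (fun s : ℝ => a₁*(u - s)^2) (-2*a₁*(u - v)) v := by
      have := ((hasDerivAt_id v).const_sub u).pow 2
      have := this.const_mul a₁
      exact this.congr_deriv (by simp only [id]; ring)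
    have h2 : HasDerivAt (fun s : ℝ => 2*a₁*(s - w)^2) (4*a₁*(v - w)) v := by
      have := ((hasDerivAt_id v).sub_const w).pow 2
      have := this.const_mul (2*a₁)
      exact this.congr_deriv (by simp only [id]; ring)
    have := ((hasDerivAt_const v w).add h1).sub h2
    convert this.deriv using 1
    · congr 1
    · ring
  have d3 : deriv (fun s => F1 a₁ u v s) w = 1 + 4*a₁*(v - w) := by
    simp only [F1]
    have h1 : HasDerivAt (fun s : ℝ => 2*a₁*(v - s)^2) (-4*a₁*(v - w)) w := by
      have := ((hasDerivAt_id w).const_sub v).pow 2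
      have := this.const_mul (2*a₁)
      exact this.congr_deriv (by simp only [id]; ring)
    have := (((hasDerivAt_id w).add_const (a₁*(u - v)^2)).sub h1)
    convert this.deriv using 1
    · congr 1
    · ring
  rw [d1, d2, d3]
  simp only [F1, h1]
  ring
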